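/- There exists a countably infinite strongly independent subset 𝒥 of Sym(Ω) which is dense in Sym(Ω) with respect to the topology of pointwise convergence. -/

import Mathlib

def StronglyIndependent {Ω : Type} (G : Set (Equiv.Perm Ω)) : Prop :=
  ∀ (n : ℕ) (w : FreeGroup (Fin (n + 1))), w ≠ 1 →
    ∀ f : Fin (n + 1) → Equiv.Perm Ω, Function.Injective f → (∀ i, f i ∈ G) →
      {x : Ω | FreeGroup.lift f w x = x}.Finite

/-- Any permutation can be matched on a finite set by a finitely supported permutation. -/
lemma exists_finsupp_perm_agree {Ω : Type} [DecidableEq Ω] (u : Equiv.Perm Ω) (S : Finset Ω) :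
    ∃ π : Equiv.Perm Ω, {x | π x ≠ x}.Finite ∧ ∀ a ∈ S, π a = u a := by
  classical
  induction S using Finset.induction_on with
  | empty => exact ⟨1, by simp, by simp⟩
  | @insert a S' ha ih =>
    obtain ⟨π', hfin, hagree⟩ := ih
    refine ⟨π' * Equiv.swap a (π'⁻¹ (u a)), ?_, ?_⟩
    · apply Set.Finite.subset (hfin.union ((Set.finite_singleton (π'⁻¹ (u a))).insert a))
      intro x hx
      simp only [Set.mem_setOf_eq, Equiv.Perm.mul_apply] at hx
      by_contra hc
      simp only [Set.mem_union, Set.mem_setOf_eq, Set.mem_insert_iff, Set.mem_singleton_iff,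
        not_or, not_not] at hc
      obtain ⟨h1, h2, h3⟩ := hc
      rw [Equiv.swap_apply_of_ne_of_ne h2 h3, h1] at hx
      exact hx rfl
    · intro b hb
      rcases Finset.mem_insert.mp hb with rfl | hb'
      · simp [Equiv.Perm.mul_apply]
      · have hba : b ≠ a := fun h => ha (h ▸ hb')
        have hbc : b ≠ π'⁻¹ (u a) := by
          intro h
          have : π' b = u a := by rw [h]; simp
          rw [hagree b hb'] at this
          exact ha ((u.injective this) ▸ hb')
        simp only [Equiv.Perm.mul_apply]
        rw [Equiv.swap_apply_of_ne_of_ne hba hbc]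
        exact hagree b hb'

lemma disagree_mul {Ω : Type} {a b c d : Equiv.Perm Ω}
    (h1 : {x | a x ≠ b x}.Finite) (h2 : {x | c x ≠ d x}.Finite) :
    {x | (a * c) x ≠ (b * d) x}.Finite := by
  apply Set.Finite.subset (h2.union (h1.preimage (Set.injOn_of_injective c.injective)))
  intro x hx
  simp only [Set.mem_setOf_eq, Equiv.Perm.mul_apply] at hx
  by_contra hc
  simp only [Set.mem_union, Set.mem_setOf_eq, Set.mem_preimage, not_or, not_not] at hc
  obtain ⟨h3, h4⟩ := hc
  rw [← h3] at hx
  exact hx h4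

lemma disagree_inv {Ω : Type} {a b : Equiv.Perm Ω}
    (h1 : {x | a x ≠ b x}.Finite) : {x | a⁻¹ x ≠ b⁻¹ x}.Finite := by
  apply Set.Finite.subset (h1.image a)
  intro x hx
  simp only [Set.mem_setOf_eq] at hx
  refine ⟨a⁻¹ x, ?_, by simp⟩
  simp only [Set.mem_setOf_eq]
  intro h
  apply hx
  have h' : b (a⁻¹ x) = x := by
    rw [← h]; simp
  calc a⁻¹ x = b⁻¹ (b (a⁻¹ x)) := by simp
    _ = b⁻¹ x := by rw [h']

theorem stmt_7 (Ω : Type) [Countable Ω] [Infinite Ω] :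
    ∃ 𝒥 : Set (Equiv.Perm Ω), 𝒥.Countable ∧ 𝒥.Infinite ∧ StronglyIndependent 𝒥 ∧
      ∀ h : Equiv.Perm Ω, ∀ S : Finset Ω, ∃ g ∈ 𝒥, ∀ a ∈ S, g a = h a := by
  classical
  have : Countable (FreeGroup ℕ) := FreeGroup.toWord_injective.countable
  have : Infinite (FreeGroup ℕ) := Infinite.of_injective FreeGroup.of FreeGroup.of_injective
  obtain ⟨e⟩ : Nonempty (Ω ≃ FreeGroup ℕ) := inferInstance
  -- translations
  set T : FreeGroup ℕ → Equiv.Perm Ω :=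
    fun v => (e.trans (Equiv.mulLeft v)).trans e.symm with hT
  have hT_apply : ∀ v x, T v x = e.symm (v * e x) := fun v x => rfl
  have hT_mul : ∀ v v', T (v * v') = T v * T v' := by
    intro v v'
    ext x
    simp [hT_apply, Equiv.Perm.mul_apply, mul_assoc]
  have hT_inv : ∀ v, T v⁻¹ = (T v)⁻¹ := by
    intro v
    rw [eq_inv_iff_mul_eq_one, ← hT_mul]
    ext x
    simp [hT_apply]
  have hT_one : T 1 = 1 := by ext x; simp [hT_apply]
  have hT_ne_of_fix : ∀ v x, T v x = x → v = 1 := by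
    intro v x hvx
    have : v * e x = e x := by
      have := congrArg e hvx
      simpa [hT_apply] using this
    exact mul_eq_right.mp this
  -- enumeration of finite partial data
  obtain ⟨q, hq⟩ := exists_surjective_nat (Finset (Ω × Ω))
  -- construction of the generators
  have spec : ∀ n : ℕ, ∃ g : Equiv.Perm Ω, {x | g x ≠ T (FreeGroup.of n) x}.Finite ∧
      ((∃ σ : Equiv.Perm Ω, ∀ p ∈ q n, σ p.1 = p.2) → ∀ p ∈ q n, g p.1 = p.2) := by
    intro n
    by_cases H : ∃ σ : Equiv.Perm Ω, ∀ p ∈ q n, σ p.1 = p.2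
    · obtain ⟨σ, hσ⟩ := H
      obtain ⟨π, hπfin, hπ⟩ := exists_finsupp_perm_agree ((T (FreeGroup.of n))⁻¹ * σ)
        ((q n).image Prod.fst)
      refine ⟨T (FreeGroup.of n) * π, ?_, ?_⟩
      · apply Set.Finite.subset hπfin
        intro x hx
        simp only [Set.mem_setOf_eq, Equiv.Perm.mul_apply] at hx ⊢
        intro h
        exact hx (by rw [h])
      · intro _ p hp
        have h1 : p.1 ∈ (q n).image Prod.fst := Finset.mem_image_of_mem _ hp
        simp only [Equiv.Perm.mul_apply]
        rw [hπ _ h1]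
        simp [hσ p hp]
    · exact ⟨T (FreeGroup.of n), by simp [Set.finite_empty], fun h => absurd h H⟩
  choose g hgfin hgagree using spec
  -- injectivity of g
  have hginj : Function.Injective g := by
    intro n m hnm
    by_contra hne
    obtain ⟨x, hx⟩ := Set.Infinite.nonempty (((hgfin n).union (hgfin m)).infinite_compl)
    simp only [Set.mem_compl_iff, Set.mem_union, Set.mem_setOf_eq, not_or, not_not] at hx
    obtain ⟨h1, h2⟩ := hx
    have : T (FreeGroup.of n) x = T (FreeGroup.of m) x := by rw [← h1, ← h2, hnm]
    have : FreeGroup.of n * e x = FreeGroup.of m * e x := by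
      have := congrArg e this
      simpa [hT_apply] using this
    exact hne (FreeGroup.of_injective (mul_right_cancel this))
  refine ⟨Set.range g, Set.countable_range g, Set.infinite_range_of_injective hginj, ?_, ?_⟩
  · -- strong independence
    intro n w hw f hfinj hfmem
    choose k hk using fun i => hfmem i
    have hkinj : Function.Injective k := by
      intro i j hij
      apply hfinj
      rw [← hk i, ← hk j, hij]
    -- key: lift f w agrees with T (map k w) off a finite set
    have key : ∀ v : FreeGroup (Fin (n + 1)),
        {x | FreeGroup.lift f v x ≠ T (FreeGroup.map k v) x}.Finite := by
      intro v
      induction v using FreeGroup.induction_on with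
      | C1 => simp [map_one, hT_one, Set.finite_empty]
      | of i =>
        have h0 := hgfin (k i)
        rw [hk i] at h0
        exact h0
      | inv_of i hi =>
        simp only [map_inv] at hi ⊢
        rw [hT_inv]
        exact disagree_inv hi
      | mul v v' hv hv' =>
        simp only [map_mul] at hv hv' ⊢
        rw [hT_mul]
        exact disagree_mul hv hv'
    -- map k w ≠ 1
    have hmapne : FreeGroup.map k w ≠ 1 := by
      intro h
      apply hw
      have hret : Function.LeftInverse (Function.invFun k) k := Function.leftInverse_invFun hkinj
      have : FreeGroup.map (Function.invFun k) (FreeGroup.map k w) = w := by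
        rw [FreeGroup.map.comp]
        have hcomp : (Function.invFun k ∘ k) = id := funext hret
        rw [hcomp]
        exact FreeGroup.map.id w
      rw [← this, h, map_one]
    apply Set.Finite.subset (key w)
    intro x hx
    simp only [Set.mem_setOf_eq] at hx ⊢
    intro h
    rw [hx] at h
    exact hmapne (hT_ne_of_fix _ _ h.symm)
  · -- density
    intro h S
    obtain ⟨n, hn⟩ := hq (S.image fun a => (a, h a))
    refine ⟨g n, Set.mem_range_self n, ?_⟩
    intro a ha
    have hgood : ∃ σ : Equiv.Perm Ω, ∀ p ∈ q n, σ p.1 = p.2 := by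
      refine ⟨h, ?_⟩
      intro p hp
      rw [hn] at hp
      obtain ⟨b, _, rfl⟩ := Finset.mem_image.mp hp
      rfl
    have := hgagree n hgood (a, h a) (by rw [hn]; exact Finset.mem_image_of_mem _ ha)
    exact this
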